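/- Let h : ℝ² → ℝ be twice continuously differentiable on an open neighborhood of [0,∞)², and suppose there are constants C > 0 and c > 0 such that |h(u,v)|, the norm of the first derivative of h, and the norm of the second derivative of h are all bounded by C·e^{c(u+v)} for (u,v) ∈ [0,∞)², and suppose h(u,0) = 0 for all u ≥ 0 and h(0,v) = 0 for all v ≥ 0. Then for every real x > c, the limit as y → ∞ of y²·∫_0^∞∫_0^∞ e^{−ux−vy} h(u,v) du dv equals ∫_0^∞ e^{−ux} (∂h/∂v)(u,0) du; and symmetrically, for every real y > c, the limit as x → ∞ of x²·∫_0^∞∫_0^∞ e^{−ux−vy} h(u,v) du dv equals ∫_0^∞ e^{−vy} (∂h/∂u)(0,v) dv. -/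

import Mathlib

open MeasureTheory Filter Set Topology

namespace BLaplace


lemma exp_bound_integrableOn {f : ℝ → ℝ} {K b : ℝ} (hb : 0 < b)
    (hm : AEStronglyMeasurable f (volume.restrict (Ioi (0:ℝ))))
    (hbd : ∀ v : ℝ, 0 < v → |f v| ≤ K * Real.exp (-(b * v))) :
    IntegrableOn f (Ioi (0:ℝ)) := by
  have hint : IntegrableOn (fun v : ℝ => K * Real.exp (-(b * v))) (Ioi 0) := by
    have := (exp_neg_integrableOn_Ioi 0 hb).const_mul K
    simp only [neg_mul] at this
    exact this
  refine hint.mono' hm ?_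
  filter_upwards [ae_restrict_mem measurableSet_Ioi] with v hv
  simpa [Real.norm_eq_abs] using hbd v hv

lemma tendsto_quadratic_mul_exp (a₂ a₁ a₀ b : ℝ) (hb : 0 < b) :
    Tendsto (fun v : ℝ => (a₂ * v ^ 2 + a₁ * v + a₀) * Real.exp (-(b * v))) atTop (𝓝 0) := by
  have key : ∀ n : ℕ, Tendsto (fun v : ℝ => v ^ n * Real.exp (-(b * v))) atTop (𝓝 0) := by
    intro n
    refine (tendsto_rpow_mul_exp_neg_mul_atTop_nhds_zero n b hb).congr' ?_
    filter_upwards [eventually_ge_atTop (0:ℝ)] with v hv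
    rw [Real.rpow_natCast, neg_mul]
  have hsum := ((key 2).const_mul a₂).add (((key 1).const_mul a₁).add ((key 0).const_mul a₀))
  have heq : (fun v : ℝ => (a₂ * v ^ 2 + a₁ * v + a₀) * Real.exp (-(b * v)))
      = fun v : ℝ => a₂ * (v ^ 2 * Real.exp (-(b * v)))
        + (a₁ * (v ^ 1 * Real.exp (-(b * v))) + a₀ * (v ^ 0 * Real.exp (-(b * v)))) := by
    funext v; ring
  rw [heq]
  simpa using hsum

lemma integral_mul_exp_Ioi {b : ℝ} (hb : 0 < b) :
    IntegrableOn (fun v : ℝ => v * Real.exp (-(b * v))) (Ioi 0) ∧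
      ∫ v in Ioi (0:ℝ), v * Real.exp (-(b * v)) = 1 / b ^ 2 := by
  set F : ℝ → ℝ := fun v => -((b * v + 1) * Real.exp (-(b * v))) / b ^ 2 with hF
  have he : ∀ v : ℝ, HasDerivAt (fun v : ℝ => Real.exp (-(b * v))) (Real.exp (-(b * v)) * (-b)) v := by
    intro v
    have h1 : HasDerivAt (fun v : ℝ => -(b * v)) (-b) v := by
      simpa using ((hasDerivAt_id v).const_mul b).fun_neg
    exact h1.exp
  have hderiv : ∀ v : ℝ, HasDerivAt F (v * Real.exp (-(b * v))) v := by
    intro v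
    have hp : HasDerivAt (fun v : ℝ => b * v + 1) b v := by
      simpa using ((hasDerivAt_id v).const_mul b).add_const 1
    have := ((hp.fun_mul (he v)).fun_neg).div_const (b ^ 2)
    refine this.congr_deriv ?_
    field_simp
    ring
  have htend : Tendsto F atTop (𝓝 0) := by
    refine (tendsto_quadratic_mul_exp 0 (-b / b ^ 2) (-1 / b ^ 2) b hb).congr fun v => ?_
    rw [hF]
    field_simp
    ring
  have hpos : ∀ v ∈ Ioi (0:ℝ), 0 ≤ v * Real.exp (-(b * v)) :=
    fun v hv => mul_nonneg (le_of_lt hv) (Real.exp_pos _).le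
  have hderiv' : ∀ v ∈ Ici (0:ℝ), HasDerivAt F (v * Real.exp (-(b * v))) v := fun v _ => hderiv v
  refine ⟨integrableOn_Ioi_deriv_of_nonneg' hderiv' hpos htend, ?_⟩
  rw [integral_Ioi_of_hasDerivAt_of_nonneg' hderiv' hpos htend]
  rw [hF]
  norm_num
  ring

lemma integral_sq_mul_exp_Ioi {b : ℝ} (hb : 0 < b) :
    IntegrableOn (fun v : ℝ => v ^ 2 * Real.exp (-(b * v))) (Ioi 0) ∧
      ∫ v in Ioi (0:ℝ), v ^ 2 * Real.exp (-(b * v)) = 2 / b ^ 3 := by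
  set G : ℝ → ℝ := fun v => -((b ^ 2 * v ^ 2 + 2 * b * v + 2) * Real.exp (-(b * v))) / b ^ 3 with hG
  have he : ∀ v : ℝ, HasDerivAt (fun v : ℝ => Real.exp (-(b * v))) (Real.exp (-(b * v)) * (-b)) v := by
    intro v
    have h1 : HasDerivAt (fun v : ℝ => -(b * v)) (-b) v := by
      simpa using ((hasDerivAt_id v).const_mul b).fun_neg
    exact h1.exp
  have hderiv : ∀ v : ℝ, HasDerivAt G (v ^ 2 * Real.exp (-(b * v))) v := by
    intro v
    have h1 : HasDerivAt (fun v : ℝ => v ^ 2) (2 * v) v := by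
      simpa using hasDerivAt_pow 2 v
    have h2 : HasDerivAt (fun v : ℝ => v) 1 v := hasDerivAt_id v
    have hp : HasDerivAt (fun v : ℝ => b ^ 2 * v ^ 2 + 2 * b * v + 2)
        (b ^ 2 * (2 * v) + 2 * b) v := by
      have := ((h1.const_mul (b ^ 2)).add (h2.const_mul (2 * b))).add_const 2
      simpa using this
    have := ((hp.fun_mul (he v)).fun_neg).div_const (b ^ 3)
    refine this.congr_deriv ?_
    field_simp
    ring
  have htend : Tendsto G atTop (𝓝 0) := by
    refine (tendsto_quadratic_mul_exp (-(b ^ 2) / b ^ 3) (-(2 * b) / b ^ 3) (-2 / b ^ 3) b hb).congr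
      fun v => ?_
    rw [hG]
    field_simp
    ring
  have hpos : ∀ v ∈ Ioi (0:ℝ), 0 ≤ v ^ 2 * Real.exp (-(b * v)) :=
    fun v _ => mul_nonneg (sq_nonneg _) (Real.exp_pos _).le
  have hderiv' : ∀ v ∈ Ici (0:ℝ), HasDerivAt G (v ^ 2 * Real.exp (-(b * v))) v := fun v _ => hderiv v
  refine ⟨integrableOn_Ioi_deriv_of_nonneg' hderiv' hpos htend, ?_⟩
  rw [integral_Ioi_of_hasDerivAt_of_nonneg' hderiv' hpos htend]
  rw [hG]
  norm_num
  ring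

lemma taylor_le (f f' f'' : ℝ → ℝ) (M v : ℝ) (hv : 0 ≤ v)
    (hd : ∀ t ∈ Icc (0:ℝ) v, HasDerivAt f (f' t) t)
    (hd' : ∀ t ∈ Icc (0:ℝ) v, HasDerivAt f' (f'' t) t)
    (hM : ∀ t ∈ Icc (0:ℝ) v, |f'' t| ≤ M)
    (hf0 : f 0 = 0) :
    |f v - v * f' 0| ≤ M * v ^ 2 / 2 := by
  have hM0 : 0 ≤ M := le_trans (abs_nonneg _) (hM 0 ⟨le_rfl, hv⟩)
  have hlip : ∀ t ∈ Icc (0:ℝ) v, |f' t - f' 0| ≤ M * t := by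
    intro t ht
    have hsub : Icc (0:ℝ) t ⊆ Icc 0 v := Icc_subset_Icc le_rfl ht.2
    have := norm_image_sub_le_of_norm_deriv_le_segment'
      (fun s hs => (hd' s (hsub hs)).hasDerivWithinAt)
      (fun s hs => hM s (hsub (Ico_subset_Icc_self hs))) t (right_mem_Icc.2 ht.1)
    simpa [Real.norm_eq_abs] using this
  have hφd : ∀ t ∈ Icc (0:ℝ) v, HasDerivAt (fun t => f t - t * f' 0) (f' t - f' 0) t :=
    fun t ht => (hd t ht).sub (hasDerivAt_mul_const (f' 0))
  have hcont' : ContinuousOn (fun t => f' t - f' 0) (Icc (0:ℝ) v) := fun t ht =>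
    ((hd' t ht).continuousAt.sub continuousAt_const).continuousWithinAt
  have hii : IntervalIntegrable (fun t => f' t - f' 0) volume 0 v := by
    apply ContinuousOn.intervalIntegrable
    rwa [uIcc_of_le hv]
  have hFTC : f v - v * f' 0 = ∫ t in (0:ℝ)..v, (f' t - f' 0) := by
    have := intervalIntegral.integral_eq_sub_of_hasDerivAt
      (fun t ht => hφd t (by rwa [uIcc_of_le hv] at ht)) hii
    rw [this, hf0]
    ring
  rw [hFTC]
  have hb : ∀ᵐ t ∂volume.restrict (Set.uIoc (0:ℝ) v), ‖f' t - f' 0‖ ≤ M * t := by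
    filter_upwards [ae_restrict_mem measurableSet_uIoc] with t ht
    rw [uIoc_of_le hv] at ht
    simpa [Real.norm_eq_abs] using hlip t ⟨ht.1.le, ht.2⟩
  have hMi : IntervalIntegrable (fun t : ℝ => M * t) volume 0 v :=
    (continuous_const.mul continuous_id).intervalIntegrable 0 v
  have h3 := intervalIntegral.norm_integral_le_abs_of_norm_le hb hMi
  have hval : ∫ t in (0:ℝ)..v, M * t = M * v ^ 2 / 2 := by
    rw [intervalIntegral.integral_const_mul, integral_id]
    ring
  rw [hval] at h3
  calc |∫ t in (0:ℝ)..v, (f' t - f' 0)| = ‖∫ t in (0:ℝ)..v, (f' t - f' 0)‖ :=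
        (Real.norm_eq_abs _).symm
    _ ≤ |M * v ^ 2 / 2| := h3
    _ = M * v ^ 2 / 2 := abs_of_nonneg (by positivity)

lemma prod_int (h : ℝ × ℝ → ℝ) (C c x y : ℝ) (hxc : c < x) (hyc : c < y)
    (hcont : ContinuousOn h (Ici (0:ℝ) ×ˢ Ici (0:ℝ)))
    (hb : ∀ u v : ℝ, 0 ≤ u → 0 ≤ v → |h (u, v)| ≤ C * Real.exp (c * (u + v))) :
    Integrable (fun p : ℝ × ℝ => Real.exp (-(p.1 * x + p.2 * y)) * h p)
      ((volume.restrict (Ioi (0:ℝ))).prod (volume.restrict (Ioi (0:ℝ)))) := by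
  have hxc' : 0 < x - c := sub_pos.2 hxc
  have hyc' : 0 < y - c := sub_pos.2 hyc
  have h1 : Integrable (fun u : ℝ => C * Real.exp (-((x - c) * u))) (volume.restrict (Ioi 0)) := by
    simpa only [neg_mul] using (exp_neg_integrableOn_Ioi 0 hxc').const_mul C
  have h2 : Integrable (fun v : ℝ => Real.exp (-((y - c) * v))) (volume.restrict (Ioi 0)) := by
    have := exp_neg_integrableOn_Ioi 0 hyc'
    simp only [neg_mul] at this
    exact this
  have hbnd := h1.mul_prod h2
  refine hbnd.mono' ?_ ?_
  · rw [Measure.prod_restrict]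
    refine ContinuousOn.aestronglyMeasurable ?_ (measurableSet_Ioi.prod measurableSet_Ioi)
    exact ((Real.continuous_exp.comp (by continuity)).continuousOn).mul
      (hcont.mono (prod_mono Ioi_subset_Ici_self Ioi_subset_Ici_self))
  · rw [Measure.prod_restrict]
    filter_upwards [ae_restrict_mem (measurableSet_Ioi.prod measurableSet_Ioi)] with p hp
    obtain ⟨hp1, hp2⟩ := hp
    rw [Real.norm_eq_abs, abs_mul, abs_of_pos (Real.exp_pos _)]
    have e1 : Real.exp (-(p.1 * x + p.2 * y)) * Real.exp (c * (p.1 + p.2))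
        = Real.exp (-((x - c) * p.1)) * Real.exp (-((y - c) * p.2)) := by
      rw [← Real.exp_add, ← Real.exp_add]; congr 1; ring
    calc Real.exp (-(p.1 * x + p.2 * y)) * |h p|
        ≤ Real.exp (-(p.1 * x + p.2 * y)) * (C * Real.exp (c * (p.1 + p.2))) :=
          mul_le_mul_of_nonneg_left (hb p.1 p.2 (le_of_lt hp1) (le_of_lt hp2))
            (Real.exp_pos _).le
      _ = C * Real.exp (-((x - c) * p.1)) * Real.exp (-((y - c) * p.2)) := by
          linear_combination C * e1

lemma key (h : ℝ × ℝ → ℝ) (a : ℝ → ℝ) (C c x : ℝ) (hc : 0 < c) (hx : c < x)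
    (hcont : ContinuousOn h (Ici (0:ℝ) ×ˢ Ici (0:ℝ)))
    (hacont : ContinuousOn a (Ici (0:ℝ)))
    (hb : ∀ u v : ℝ, 0 ≤ u → 0 ≤ v → |h (u, v)| ≤ C * Real.exp (c * (u + v)))
    (hab : ∀ u : ℝ, 0 ≤ u → |a u| ≤ C * Real.exp (c * u))
    (htay : ∀ u v : ℝ, 0 ≤ u → 0 ≤ v →
      |h (u, v) - v * a u| ≤ C * Real.exp (c * (u + v)) * v ^ 2) :
    Tendsto (fun y : ℝ => y ^ 2 * ∫ u in Ioi (0:ℝ), ∫ v in Ioi (0:ℝ),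
        Real.exp (-(u * x + v * y)) * h (u, v)) atTop
      (𝓝 (∫ u in Ioi (0:ℝ), Real.exp (-(u * x)) * a u)) := by
  have hxc : 0 < x - c := sub_pos.2 hx
  have hcont_h : ∀ u : ℝ, 0 ≤ u → ContinuousOn (fun v => h (u, v)) (Ici (0:ℝ)) := by
    intro u hu
    exact hcont.comp (Continuous.continuousOn (by continuity)) (fun v hv => ⟨hu, hv⟩)
  have hL : IntegrableOn (fun u : ℝ => Real.exp (-(u * x)) * a u) (Ioi 0) := by
    refine exp_bound_integrableOn (K := C) hxc ?_ ?_
    · exact (((Real.continuous_exp.comp (by continuity)).continuousOn).mul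
        (hacont.mono Ioi_subset_Ici_self)).aestronglyMeasurable measurableSet_Ioi
    · intro u hu
      have e1 : Real.exp (-(u * x)) * Real.exp (c * u) = Real.exp (-((x - c) * u)) := by
        rw [← Real.exp_add]; congr 1; ring
      calc |Real.exp (-(u * x)) * a u| = Real.exp (-(u * x)) * |a u| := by
            rw [abs_mul, abs_of_pos (Real.exp_pos _)]
        _ ≤ Real.exp (-(u * x)) * (C * Real.exp (c * u)) :=
            mul_le_mul_of_nonneg_left (hab u hu.le) (Real.exp_pos _).le
        _ = C * Real.exp (-((x - c) * u)) := by linear_combination C * e1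
  set D : ℝ := ∫ u in Ioi (0:ℝ), Real.exp (-((x - c) * u)) with hD
  have hDint : IntegrableOn (fun u : ℝ => Real.exp (-((x - c) * u))) (Ioi 0) := by
    simpa only [neg_mul] using exp_neg_integrableOn_Ioi 0 hxc
  have main : ∀ y : ℝ, c < y →
      |y ^ 2 * (∫ u in Ioi (0:ℝ), ∫ v in Ioi (0:ℝ), Real.exp (-(u * x + v * y)) * h (u, v))
        - ∫ u in Ioi (0:ℝ), Real.exp (-(u * x)) * a u|
        ≤ 2 * C * D * (y ^ 2 / (y - c) ^ 3) := by
    intro y hy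
    have hy0 : 0 < y := hc.trans hy
    have hyc : 0 < y - c := sub_pos.2 hy
    have hIh : ∀ u : ℝ, 0 ≤ u →
        IntegrableOn (fun v => Real.exp (-(v * y)) * h (u, v)) (Ioi 0) := by
      intro u hu
      refine exp_bound_integrableOn (K := C * Real.exp (c * u)) hyc ?_ ?_
      · exact (((Real.continuous_exp.comp (by continuity)).continuousOn).mul
          ((hcont_h u hu).mono Ioi_subset_Ici_self)).aestronglyMeasurable measurableSet_Ioi
      · intro v hv
        have e1 : Real.exp (-(v * y)) * Real.exp (c * (u + v))
            = Real.exp (c * u) * Real.exp (-((y - c) * v)) := by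
          rw [← Real.exp_add, ← Real.exp_add]; congr 1; ring
        calc |Real.exp (-(v * y)) * h (u, v)| = Real.exp (-(v * y)) * |h (u, v)| := by
              rw [abs_mul, abs_of_pos (Real.exp_pos _)]
          _ ≤ Real.exp (-(v * y)) * (C * Real.exp (c * (u + v))) :=
              mul_le_mul_of_nonneg_left (hb u v hu hv.le) (Real.exp_pos _).le
          _ = C * Real.exp (c * u) * Real.exp (-((y - c) * v)) := by linear_combination C * e1
    have hIv := integral_mul_exp_Ioi hy0
    have hIv2 := integral_sq_mul_exp_Ioi hyc
    have inner : ∀ u : ℝ, 0 ≤ u →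
        |y ^ 2 * (∫ v in Ioi (0:ℝ), Real.exp (-(v * y)) * h (u, v)) - a u|
          ≤ 2 * C * Real.exp (c * u) * (y ^ 2 / (y - c) ^ 3) := by
      intro u hu
      have heq2 : (fun v : ℝ => Real.exp (-(v * y)) * (v * a u))
          = fun v : ℝ => a u * (v * Real.exp (-(y * v))) := by
        funext v; rw [mul_comm v y]; ring
      have hI2 : IntegrableOn (fun v : ℝ => Real.exp (-(v * y)) * (v * a u)) (Ioi 0) := by
        rw [heq2]; exact hIv.1.const_mul (a u)
      have hval2 : ∫ v in Ioi (0:ℝ), Real.exp (-(v * y)) * (v * a u) = a u / y ^ 2 := by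
        rw [heq2, integral_const_mul, hIv.2]; ring
      have hdiff : y ^ 2 * (∫ v in Ioi (0:ℝ), Real.exp (-(v * y)) * h (u, v)) - a u
          = y ^ 2 * ∫ v in Ioi (0:ℝ), Real.exp (-(v * y)) * (h (u, v) - v * a u) := by
        have hsplit : (fun v : ℝ => Real.exp (-(v * y)) * (h (u, v) - v * a u))
            = fun v : ℝ => Real.exp (-(v * y)) * h (u, v) - Real.exp (-(v * y)) * (v * a u) := by
          funext v; ring
        rw [hsplit, integral_sub (hIh u hu) hI2, hval2]
        field_simp
      rw [hdiff]
      have hptw : ∀ᵐ v ∂volume.restrict (Ioi (0:ℝ)),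
          ‖Real.exp (-(v * y)) * (h (u, v) - v * a u)‖
            ≤ (C * Real.exp (c * u)) * (v ^ 2 * Real.exp (-((y - c) * v))) := by
        filter_upwards [ae_restrict_mem measurableSet_Ioi] with v hv
        have hv' : (0:ℝ) ≤ v := le_of_lt hv
        rw [Real.norm_eq_abs, abs_mul, abs_of_pos (Real.exp_pos _)]
        have e1 : Real.exp (-(v * y)) * Real.exp (c * (u + v))
            = Real.exp (c * u) * Real.exp (-((y - c) * v)) := by
          rw [← Real.exp_add, ← Real.exp_add]; congr 1; ring
        calc Real.exp (-(v * y)) * |h (u, v) - v * a u|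
            ≤ Real.exp (-(v * y)) * (C * Real.exp (c * (u + v)) * v ^ 2) :=
              mul_le_mul_of_nonneg_left (htay u v hu hv') (Real.exp_pos _).le
          _ = (C * Real.exp (c * u)) * (v ^ 2 * Real.exp (-((y - c) * v))) := by
              linear_combination (C * v ^ 2) * e1
      have hIb : IntegrableOn
          (fun v : ℝ => (C * Real.exp (c * u)) * (v ^ 2 * Real.exp (-((y - c) * v))))
          (Ioi 0) := hIv2.1.const_mul _
      have hnorm := norm_integral_le_of_norm_le hIb hptw
      have hbval : ∫ v in Ioi (0:ℝ),
          (C * Real.exp (c * u)) * (v ^ 2 * Real.exp (-((y - c) * v)))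
            = (C * Real.exp (c * u)) * (2 / (y - c) ^ 3) := by
        rw [integral_const_mul, hIv2.2]
      rw [hbval] at hnorm
      calc |y ^ 2 * ∫ v in Ioi (0:ℝ), Real.exp (-(v * y)) * (h (u, v) - v * a u)|
          = y ^ 2 * ‖∫ v in Ioi (0:ℝ), Real.exp (-(v * y)) * (h (u, v) - v * a u)‖ := by
            rw [abs_mul, abs_of_nonneg (by positivity : (0:ℝ) ≤ y ^ 2), Real.norm_eq_abs]
        _ ≤ y ^ 2 * ((C * Real.exp (c * u)) * (2 / (y - c) ^ 3)) :=
            mul_le_mul_of_nonneg_left hnorm (by positivity)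
        _ = 2 * C * Real.exp (c * u) * (y ^ 2 / (y - c) ^ 3) := by ring
    have hprod := prod_int h C c x y hx hy hcont hb
    have hJ : Integrable (fun u : ℝ => ∫ v in Ioi (0:ℝ), Real.exp (-(u * x + v * y)) * h (u, v))
        (volume.restrict (Ioi (0:ℝ))) := hprod.integral_prod_left
    have hsplitu : ∀ u : ℝ, (∫ v in Ioi (0:ℝ), Real.exp (-(u * x + v * y)) * h (u, v))
        = Real.exp (-(u * x)) * ∫ v in Ioi (0:ℝ), Real.exp (-(v * y)) * h (u, v) := by
      intro u
      rw [← integral_const_mul]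
      refine integral_congr_ae (ae_of_all _ fun v => ?_)
      have e1 : Real.exp (-(u * x)) * Real.exp (-(v * y)) = Real.exp (-(u * x + v * y)) := by
        rw [← Real.exp_add]; congr 1; ring
      linear_combination (-(h (u, v))) * e1
    have hdiff2 : y ^ 2 * (∫ u in Ioi (0:ℝ), ∫ v in Ioi (0:ℝ),
          Real.exp (-(u * x + v * y)) * h (u, v))
        - (∫ u in Ioi (0:ℝ), Real.exp (-(u * x)) * a u)
        = ∫ u in Ioi (0:ℝ), (y ^ 2 * (∫ v in Ioi (0:ℝ), Real.exp (-(u * x + v * y)) * h (u, v))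
            - Real.exp (-(u * x)) * a u) := by
      rw [← integral_const_mul, ← integral_sub (hJ.const_mul (y ^ 2)) hL]
    rw [hdiff2]
    have hptw2 : ∀ᵐ u ∂volume.restrict (Ioi (0:ℝ)),
        ‖y ^ 2 * (∫ v in Ioi (0:ℝ), Real.exp (-(u * x + v * y)) * h (u, v))
          - Real.exp (-(u * x)) * a u‖
          ≤ (2 * C * (y ^ 2 / (y - c) ^ 3)) * Real.exp (-((x - c) * u)) := by
      filter_upwards [ae_restrict_mem measurableSet_Ioi] with u hu
      have hu' : (0:ℝ) ≤ u := hu.le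
      rw [hsplitu u, Real.norm_eq_abs]
      have hre : y ^ 2 * (Real.exp (-(u * x)) * ∫ v in Ioi (0:ℝ), Real.exp (-(v * y)) * h (u, v))
          - Real.exp (-(u * x)) * a u
          = Real.exp (-(u * x)) * (y ^ 2 * (∫ v in Ioi (0:ℝ), Real.exp (-(v * y)) * h (u, v))
            - a u) := by ring
      rw [hre, abs_mul, abs_of_pos (Real.exp_pos _)]
      have e1 : Real.exp (-(u * x)) * Real.exp (c * u) = Real.exp (-((x - c) * u)) := by
        rw [← Real.exp_add]; congr 1; ring
      calc Real.exp (-(u * x)) * |y ^ 2 * (∫ v in Ioi (0:ℝ), Real.exp (-(v * y)) * h (u, v)) - a u|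
          ≤ Real.exp (-(u * x)) * (2 * C * Real.exp (c * u) * (y ^ 2 / (y - c) ^ 3)) :=
            mul_le_mul_of_nonneg_left (inner u hu') (Real.exp_pos _).le
        _ = (2 * C * (y ^ 2 / (y - c) ^ 3)) * Real.exp (-((x - c) * u)) := by
            linear_combination (2 * C * (y ^ 2 / (y - c) ^ 3)) * e1
    have hIb2 : Integrable (fun u : ℝ => (2 * C * (y ^ 2 / (y - c) ^ 3))
        * Real.exp (-((x - c) * u))) (volume.restrict (Ioi 0)) := hDint.const_mul _
    have hnorm2 := norm_integral_le_of_norm_le hIb2 hptw2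
    rw [integral_const_mul] at hnorm2
    calc |∫ u in Ioi (0:ℝ), (y ^ 2 * (∫ v in Ioi (0:ℝ),
          Real.exp (-(u * x + v * y)) * h (u, v)) - Real.exp (-(u * x)) * a u)|
        = ‖∫ u in Ioi (0:ℝ), (y ^ 2 * (∫ v in Ioi (0:ℝ),
          Real.exp (-(u * x + v * y)) * h (u, v)) - Real.exp (-(u * x)) * a u)‖ :=
          (Real.norm_eq_abs _).symm
      _ ≤ (2 * C * (y ^ 2 / (y - c) ^ 3)) * D := hnorm2
      _ = 2 * C * D * (y ^ 2 / (y - c) ^ 3) := by ring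
  rw [← tendsto_sub_nhds_zero_iff]
  refine squeeze_zero_norm' (a := fun y : ℝ => 2 * C * D * (y ^ 2 / (y - c) ^ 3)) ?_ ?_
  · filter_upwards [eventually_gt_atTop c] with y hy
    simpa [Real.norm_eq_abs] using main y hy
  · have hrate : Tendsto (fun y : ℝ => y ^ 2 / (y - c) ^ 3) atTop (𝓝 0) := by
      have h8 : Tendsto (fun y : ℝ => 8 * y⁻¹) atTop (𝓝 0) := by
        simpa using (tendsto_inv_atTop_zero (𝕜 := ℝ)).const_mul (8:ℝ)
      refine squeeze_zero' ?_ ?_ h8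
      · filter_upwards [eventually_gt_atTop c] with y hy
        have : 0 < y - c := sub_pos.2 hy
        positivity
      · filter_upwards [eventually_ge_atTop (max (2 * c) 1)] with y hy
        have hy1 : (1:ℝ) ≤ y := le_trans (le_max_right _ _) hy
        have hy2 : 2 * c ≤ y := le_trans (le_max_left _ _) hy
        have hy0 : (0:ℝ) < y := lt_of_lt_of_le one_pos hy1
        have hhalf : y / 2 ≤ y - c := by linarith
        have hpow : (y / 2) ^ 3 ≤ (y - c) ^ 3 := pow_le_pow_left₀ (by linarith) hhalf 3
        have hle : y ^ 2 / (y - c) ^ 3 ≤ y ^ 2 / ((y / 2) ^ 3) :=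
          div_le_div_of_nonneg_left (by positivity) (by positivity) hpow
        have heq : y ^ 2 / ((y / 2) ^ 3) = 8 * y⁻¹ := by
          field_simp
          ring
        rw [← heq]
        exact hle
    have := hrate.const_mul (2 * C * D)
    simpa using this


end BLaplace


open BLaplace

theorem boundary_laplace_transform_limit (h : ℝ × ℝ → ℝ) (C c : ℝ) (hC : 0 < C) (hc : 0 < c)
    (hsmooth : ∃ U : Set (ℝ × ℝ), IsOpen U ∧ (Set.Ici (0 : ℝ) ×ˢ Set.Ici (0 : ℝ)) ⊆ U ∧
      ContDiffOn ℝ 2 h U)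
    (hbound : ∀ u v : ℝ, 0 ≤ u → 0 ≤ v →
      |h (u, v)| ≤ C * Real.exp (c * (u + v)) ∧
      ‖iteratedFDeriv ℝ 1 h (u, v)‖ ≤ C * Real.exp (c * (u + v)) ∧
      ‖iteratedFDeriv ℝ 2 h (u, v)‖ ≤ C * Real.exp (c * (u + v)))
    (hrow : ∀ u : ℝ, 0 ≤ u → h (u, 0) = 0)
    (hcol : ∀ v : ℝ, 0 ≤ v → h (0, v) = 0) :
    (∀ x : ℝ, c < x →
      Tendsto (fun y : ℝ => y ^ 2 *
          ∫ u in Set.Ioi (0 : ℝ), ∫ v in Set.Ioi (0 : ℝ),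
            Real.exp (-(u * x + v * y)) * h (u, v))
        atTop
        (nhds (∫ u in Set.Ioi (0 : ℝ),
          Real.exp (-(u * x)) * fderiv ℝ h (u, 0) ((0 : ℝ), (1 : ℝ))))) ∧
    (∀ y : ℝ, c < y →
      Tendsto (fun x : ℝ => x ^ 2 *
          ∫ u in Set.Ioi (0 : ℝ), ∫ v in Set.Ioi (0 : ℝ),
            Real.exp (-(u * x + v * y)) * h (u, v))
        atTop
        (nhds (∫ v in Set.Ioi (0 : ℝ),
          Real.exp (-(v * y)) * fderiv ℝ h (0, v) ((1 : ℝ), (0 : ℝ))))) := by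
  obtain ⟨U, hUopen, hUsub, hsm⟩ := hsmooth
  have hUmem : ∀ u v : ℝ, 0 ≤ u → 0 ≤ v → ((u, v) : ℝ × ℝ) ∈ U :=
    fun u v hu hv => hUsub ⟨hu, hv⟩
  have hdiff : ∀ z ∈ U, DifferentiableAt ℝ h z := fun z hz =>
    (hsm.differentiableOn (by norm_num)).differentiableAt (hUopen.mem_nhds hz)
  have hC1 : ContDiffOn ℝ 1 (fderiv ℝ h) U := hsm.fderiv_of_isOpen hUopen (by norm_num)
  have hdiff2 : ∀ z ∈ U, DifferentiableAt ℝ (fderiv ℝ h) z := fun z hz =>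
    (hC1.differentiableOn one_ne_zero).differentiableAt (hUopen.mem_nhds hz)
  have hfdc : ContinuousOn (fderiv ℝ h) U := hC1.continuousOn
  have hcont : ContinuousOn h (Ici (0:ℝ) ×ˢ Ici (0:ℝ)) := hsm.continuousOn.mono hUsub
  have hnorm01 : ‖(((0:ℝ), (1:ℝ)) : ℝ × ℝ)‖ = 1 := by simp [Prod.norm_def]
  have hnorm10 : ‖(((1:ℝ), (0:ℝ)) : ℝ × ℝ)‖ = 1 := by simp [Prod.norm_def]
  -- bound for first derivative applied to a unit vector
  have hfd_le : ∀ (z : ℝ × ℝ) (e : ℝ × ℝ), ‖e‖ = 1 → 0 ≤ z.1 → 0 ≤ z.2 →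
      |fderiv ℝ h z e| ≤ C * Real.exp (c * (z.1 + z.2)) := by
    intro z e he hz1 hz2
    have e1 : iteratedFDeriv ℝ 1 h z ![e] = fderiv ℝ h z e := by
      rw [iteratedFDeriv_one_apply]; simp
    calc |fderiv ℝ h z e| = ‖iteratedFDeriv ℝ 1 h z ![e]‖ := by rw [e1, Real.norm_eq_abs]
      _ ≤ ‖iteratedFDeriv ℝ 1 h z‖ * ∏ i, ‖(![e]) i‖ := (iteratedFDeriv ℝ 1 h z).le_opNorm _
      _ = ‖iteratedFDeriv ℝ 1 h z‖ := by simp [he]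
      _ ≤ C * Real.exp (c * (z.1 + z.2)) := (hbound z.1 z.2 hz1 hz2).2.1
  -- bound for second derivative applied twice to a unit vector
  have hsec_le : ∀ (z : ℝ × ℝ) (e : ℝ × ℝ), ‖e‖ = 1 → 0 ≤ z.1 → 0 ≤ z.2 →
      |(fderiv ℝ (fderiv ℝ h) z e) e| ≤ C * Real.exp (c * (z.1 + z.2)) := by
    intro z e he hz1 hz2
    have e2 : iteratedFDeriv ℝ 2 h z ![e, e] = (fderiv ℝ (fderiv ℝ h) z e) e := by
      rw [iteratedFDeriv_two_apply]; simp
    calc |(fderiv ℝ (fderiv ℝ h) z e) e| = ‖iteratedFDeriv ℝ 2 h z ![e, e]‖ := by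
          rw [e2, Real.norm_eq_abs]
      _ ≤ ‖iteratedFDeriv ℝ 2 h z‖ * ∏ i, ‖(![e, e]) i‖ := (iteratedFDeriv ℝ 2 h z).le_opNorm _
      _ = ‖iteratedFDeriv ℝ 2 h z‖ := by simp [Fin.prod_univ_two, he]
      _ ≤ C * Real.exp (c * (z.1 + z.2)) := (hbound z.1 z.2 hz1 hz2).2.2
  -- derivatives along vertical lines
  have curve2 : ∀ (u t : ℝ), HasDerivAt (fun s : ℝ => ((u, s) : ℝ × ℝ)) (0, 1) t :=
    fun u t => (hasDerivAt_const t u).prodMk (hasDerivAt_id t)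
  have hd2 : ∀ u t : ℝ, 0 ≤ u → 0 ≤ t →
      HasDerivAt (fun s => h (u, s)) (fderiv ℝ h (u, t) (0, 1)) t :=
    fun u t hu ht =>
      (hdiff _ (hUmem u t hu ht)).hasFDerivAt.comp_hasDerivAt t (curve2 u t)
  have hd2' : ∀ u t : ℝ, 0 ≤ u → 0 ≤ t →
      HasDerivAt (fun s => fderiv ℝ h (u, s) (0, 1))
        ((fderiv ℝ (fderiv ℝ h) (u, t) (0, 1)) (0, 1)) t := by
    intro u t hu ht
    have h1 : HasDerivAt (fun s => fderiv ℝ h (u, s)) (fderiv ℝ (fderiv ℝ h) (u, t) (0, 1)) t :=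
      (hdiff2 _ (hUmem u t hu ht)).hasFDerivAt.comp_hasDerivAt t (curve2 u t)
    simpa using h1.clm_apply (hasDerivAt_const t (((0:ℝ), (1:ℝ)) : ℝ × ℝ))
  -- derivatives along horizontal lines
  have curve1 : ∀ (u t : ℝ), HasDerivAt (fun s : ℝ => ((s, u) : ℝ × ℝ)) (1, 0) t :=
    fun u t => (hasDerivAt_id t).prodMk (hasDerivAt_const t u)
  have hd1 : ∀ u t : ℝ, 0 ≤ u → 0 ≤ t →
      HasDerivAt (fun s => h (s, u)) (fderiv ℝ h (t, u) (1, 0)) t :=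
    fun u t hu ht =>
      (hdiff _ (hUmem t u ht hu)).hasFDerivAt.comp_hasDerivAt t (curve1 u t)
  have hd1' : ∀ u t : ℝ, 0 ≤ u → 0 ≤ t →
      HasDerivAt (fun s => fderiv ℝ h (s, u) (1, 0))
        ((fderiv ℝ (fderiv ℝ h) (t, u) (1, 0)) (1, 0)) t := by
    intro u t hu ht
    have h1 : HasDerivAt (fun s => fderiv ℝ h (s, u)) (fderiv ℝ (fderiv ℝ h) (t, u) (1, 0)) t :=
      (hdiff2 _ (hUmem t u ht hu)).hasFDerivAt.comp_hasDerivAt t (curve1 u t)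
    simpa using h1.clm_apply (hasDerivAt_const t (((1:ℝ), (0:ℝ)) : ℝ × ℝ))
  -- Taylor bounds
  have htay2 : ∀ u v : ℝ, 0 ≤ u → 0 ≤ v →
      |h (u, v) - v * fderiv ℝ h (u, 0) (0, 1)| ≤ C * Real.exp (c * (u + v)) * v ^ 2 := by
    intro u v hu hv
    have hM : ∀ t ∈ Icc (0:ℝ) v,
        |(fderiv ℝ (fderiv ℝ h) (u, t) (0, 1)) ((0:ℝ), (1:ℝ))| ≤ C * Real.exp (c * (u + v)) := by
      intro t ht
      refine (hsec_le (u, t) (0, 1) hnorm01 hu ht.1).trans ?_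
      have : c * (u + t) ≤ c * (u + v) := mul_le_mul_of_nonneg_left (by linarith [ht.2]) hc.le
      exact mul_le_mul_of_nonneg_left (Real.exp_le_exp.2 this) hC.le
    have htl := taylor_le (fun t => h (u, t)) (fun t => fderiv ℝ h (u, t) (0, 1))
      (fun t => (fderiv ℝ (fderiv ℝ h) (u, t) (0, 1)) (0, 1)) (C * Real.exp (c * (u + v))) v hv
      (fun t ht => hd2 u t hu ht.1) (fun t ht => hd2' u t hu ht.1) hM (hrow u hu)
    have h2 : C * Real.exp (c * (u + v)) * v ^ 2 / 2 ≤ C * Real.exp (c * (u + v)) * v ^ 2 := by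
      have : 0 ≤ C * Real.exp (c * (u + v)) * v ^ 2 := by positivity
      linarith
    exact htl.trans h2
  have htay1 : ∀ u v : ℝ, 0 ≤ u → 0 ≤ v →
      |h (v, u) - v * fderiv ℝ h (0, u) (1, 0)| ≤ C * Real.exp (c * (u + v)) * v ^ 2 := by
    intro u v hu hv
    have hM : ∀ t ∈ Icc (0:ℝ) v,
        |(fderiv ℝ (fderiv ℝ h) (t, u) (1, 0)) ((1:ℝ), (0:ℝ))| ≤ C * Real.exp (c * (u + v)) := by
      intro t ht
      refine (hsec_le (t, u) (1, 0) hnorm10 ht.1 hu).trans ?_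
      have : c * (t + u) ≤ c * (u + v) := mul_le_mul_of_nonneg_left (by linarith [ht.2]) hc.le
      exact mul_le_mul_of_nonneg_left (Real.exp_le_exp.2 this) hC.le
    have htl := taylor_le (fun t => h (t, u)) (fun t => fderiv ℝ h (t, u) (1, 0))
      (fun t => (fderiv ℝ (fderiv ℝ h) (t, u) (1, 0)) (1, 0)) (C * Real.exp (c * (u + v))) v hv
      (fun t ht => hd1 u t hu ht.1) (fun t ht => hd1' u t hu ht.1) hM (hcol u hu)
    have h2 : C * Real.exp (c * (u + v)) * v ^ 2 / 2 ≤ C * Real.exp (c * (u + v)) * v ^ 2 := by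
      have : 0 ≤ C * Real.exp (c * (u + v)) * v ^ 2 := by positivity
      linarith
    exact htl.trans h2
  -- boundary derivative functions: bounds and continuity
  have hab2 : ∀ u : ℝ, 0 ≤ u → |fderiv ℝ h (u, 0) (0, 1)| ≤ C * Real.exp (c * u) := by
    intro u hu
    simpa using hfd_le (u, 0) (0, 1) hnorm01 hu le_rfl
  have hab1 : ∀ u : ℝ, 0 ≤ u → |fderiv ℝ h (0, u) (1, 0)| ≤ C * Real.exp (c * u) := by
    intro u hu
    simpa using hfd_le (0, u) (1, 0) hnorm10 le_rfl hu
  have hacont2 : ContinuousOn (fun u : ℝ => fderiv ℝ h (u, 0) (0, 1)) (Ici (0:ℝ)) := by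
    have h1 : ContinuousOn (fun u : ℝ => fderiv ℝ h (u, 0)) (Ici (0:ℝ)) :=
      hfdc.comp (Continuous.continuousOn (continuous_id.prodMk continuous_const))
        (fun u hu => hUmem u 0 hu le_rfl)
    exact h1.clm_apply continuousOn_const
  have hacont1 : ContinuousOn (fun u : ℝ => fderiv ℝ h (0, u) (1, 0)) (Ici (0:ℝ)) := by
    have h1 : ContinuousOn (fun u : ℝ => fderiv ℝ h (0, u)) (Ici (0:ℝ)) :=
      hfdc.comp (Continuous.continuousOn (continuous_const.prodMk continuous_id))
        (fun u hu => hUmem 0 u le_rfl hu)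
    exact h1.clm_apply continuousOn_const
  constructor
  · intro x hx
    exact key h (fun u => fderiv ℝ h (u, 0) (0, 1)) C c x hc hx hcont hacont2
      (fun u v hu hv => (hbound u v hu hv).1) hab2 htay2
  · intro y hy
    have hcont' : ContinuousOn (fun p : ℝ × ℝ => h (p.2, p.1)) (Ici (0:ℝ) ×ˢ Ici (0:ℝ)) :=
      hcont.comp (Continuous.continuousOn (continuous_snd.prodMk continuous_fst))
        (fun p hp => ⟨hp.2, hp.1⟩)
    have hb' : ∀ u v : ℝ, 0 ≤ u → 0 ≤ v →
        |h (v, u)| ≤ C * Real.exp (c * (u + v)) := by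
      intro u v hu hv
      have := (hbound v u hv hu).1
      rwa [add_comm v u] at this
    have hkey := key (fun p : ℝ × ℝ => h (p.2, p.1)) (fun u => fderiv ℝ h (0, u) (1, 0))
      C c y hc hy hcont' hacont1 hb' hab1 htay1
    refine hkey.congr' ?_
    filter_upwards [eventually_gt_atTop c] with X hX
    congr 1
    have hprod : Integrable (fun p : ℝ × ℝ => Real.exp (-(p.1 * X + p.2 * y)) * h p)
        ((volume.restrict (Ioi (0:ℝ))).prod (volume.restrict (Ioi (0:ℝ)))) :=
      prod_int h C c X y hX hy hcont (fun u v hu hv => (hbound u v hu hv).1)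
    have hswap := integral_integral_swap
      (f := fun u v : ℝ => Real.exp (-(u * X + v * y)) * h (u, v)) hprod
    rw [hswap]
    refine integral_congr_ae (ae_of_all _ fun w => ?_)
    refine integral_congr_ae (ae_of_all _ fun s => ?_)
    show Real.exp (-(w * y + s * X)) * h (s, w) = Real.exp (-(s * X + w * y)) * h (s, w)
    rw [add_comm (w * y) (s * X)]
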